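/- For every t in the closed interval [-1,1], the integral ∫_{-1}^{1} ln|t-s| · (1-s²)^{-1/2} ds equals -π·ln 2. -/

import Mathlib

open MeasureTheory Set Real

lemma aux_integrableOn_log_Ioo : IntegrableOn Real.log (Ioo (0:ℝ) 1) := by
  have h : IntegrableOn (fun x : ℝ => -Real.log x) (Ioc (0:ℝ) 1) := by
    apply intervalIntegral.integrableOn_deriv_of_nonneg (g := fun x => x + Real.negMulLog x)
    · exact (continuous_id.add Real.continuous_negMulLog).continuousOn
    · intro x hx
      have := (Real.hasDerivAt_negMulLog (ne_of_gt hx.1))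
      exact ((hasDerivAt_id' x).add this).congr_deriv (by ring)
    · intro x hx
      simp only [neg_nonneg]
      exact Real.log_nonpos hx.1.le hx.2.le
  have h2 : IntegrableOn (fun x : ℝ => -(-Real.log x)) (Ioo (0:ℝ) 1) :=
    (h.mono_set Ioo_subset_Ioc_self).neg
  simpa using h2

lemma aux_intervalIntegrable_log (a b : ℝ) : IntervalIntegrable Real.log volume a b := by
  have key : ∀ c : ℝ, 0 ≤ c → IntervalIntegrable Real.log volume 0 c := by
    intro c hc
    rw [intervalIntegrable_iff_integrableOn_Ioc_of_le hc]
    have h1 : IntegrableOn Real.log (Ioo (0:ℝ) 1) := aux_integrableOn_log_Ioo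
    have h2 : IntegrableOn Real.log (Icc (1:ℝ) (max 1 c)) := by
      apply ContinuousOn.integrableOn_Icc
      exact Real.continuousOn_log.mono (fun x hx => by
        simp only [mem_compl_iff, mem_singleton_iff]
        intro h; rw [h] at hx; exact absurd hx.1 (by norm_num))
    apply (h1.union h2).mono_set
    intro x hx
    rcases lt_or_ge x 1 with h | h
    · exact Or.inl ⟨hx.1, h⟩
    · exact Or.inr ⟨h, le_max_of_le_right hx.2⟩
  have keyneg : ∀ c : ℝ, c ≤ 0 → IntervalIntegrable Real.log volume 0 c := by
    intro c hc
    have := ((IntervalIntegrable.iff_comp_neg (a := 0) (b := -c)).mp (key (-c) (by linarith)))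
    simp only [Real.log_neg_eq_log, neg_zero, neg_neg] at this
    exact this
  have h0 : ∀ c : ℝ, IntervalIntegrable Real.log volume 0 c := fun c => by
    rcases le_total 0 c with h | h
    · exact key c h
    · exact keyneg c h
  exact (h0 a).symm.trans (h0 b)

lemma aux_sin_lower {u : ℝ} (hu : u ∈ Ioo (-(π/2)) (3*π/2)) :
    4 / (3*π^2) * (|u| * |u - π|) ≤ |Real.sin u| := by
  have hπ := Real.pi_pos
  have hmin : 2/π * min |u| |u - π| ≤ |Real.sin u| := by
    rcases le_total u (π/2) with h | h
    · have h1 : |u| ≤ π/2 := abs_le.2 ⟨by linarith [hu.1], h⟩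
      have hkey : 2/π * |u| ≤ Real.sin |u| := Real.mul_le_sin (abs_nonneg u) h1
      have h2 : Real.sin |u| = |Real.sin u| := by
        rcases le_or_gt 0 u with h' | h'
        · rw [abs_of_nonneg h', abs_of_nonneg (Real.sin_nonneg_of_nonneg_of_le_pi h' (by linarith))]
        · have hs : Real.sin u ≤ 0 := by
            have h5 : (0:ℝ) ≤ Real.sin (-u) :=
              Real.sin_nonneg_of_nonneg_of_le_pi (by linarith) (by linarith [hu.1])
            simpa [Real.sin_neg] using h5
          rw [abs_of_neg h', Real.sin_neg, abs_of_nonpos hs]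
      calc 2/π * min |u| |u - π| ≤ 2/π * |u| :=
            mul_le_mul_of_nonneg_left (min_le_left _ _) (by positivity)
        _ ≤ |Real.sin u| := h2 ▸ hkey
    · have h1 : |u - π| ≤ π/2 := abs_le.2 ⟨by linarith, by linarith [hu.2]⟩
      have hkey : 2/π * |u - π| ≤ Real.sin |u - π| := Real.mul_le_sin (abs_nonneg _) h1
      have h2 : Real.sin |u - π| = |Real.sin u| := by
        rcases le_or_gt π u with h' | h'
        · have hs : Real.sin (u - π) = -Real.sin u := by
            rw [Real.sin_sub, Real.sin_pi, Real.cos_pi]; ring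
          have h3 : Real.sin u ≤ 0 := by
            have h5 : (0:ℝ) ≤ Real.sin (u - π) :=
              Real.sin_nonneg_of_nonneg_of_le_pi (by linarith) (by linarith [hu.2])
            rw [hs] at h5; linarith
          rw [abs_of_nonneg (by linarith : (0:ℝ) ≤ u - π), hs, abs_of_nonpos h3]
        · rw [abs_of_neg (by linarith : u - π < 0), neg_sub, Real.sin_pi_sub,
            abs_of_nonneg (Real.sin_nonneg_of_nonneg_of_le_pi (by linarith) h'.le)]
      calc 2/π * min |u| |u - π| ≤ 2/π * |u - π| :=
            mul_le_mul_of_nonneg_left (min_le_right _ _) (by positivity)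
        _ ≤ |Real.sin u| := h2 ▸ hkey
  have hmax : max |u| |u - π| ≤ 3*π/2 :=
    max_le (abs_le.2 ⟨by linarith [hu.1], by linarith [hu.2]⟩)
      (abs_le.2 ⟨by linarith [hu.1], by linarith [hu.2]⟩)
  have hminnn : 0 ≤ min |u| |u - π| := le_min (abs_nonneg _) (abs_nonneg _)
  calc 4 / (3*π^2) * (|u| * |u - π|)
      = 4 / (3*π^2) * (min |u| |u - π| * max |u| |u - π|) := by rw [min_mul_max]
    _ ≤ 4 / (3*π^2) * (min |u| |u - π| * (3*π/2)) := by
        apply mul_le_mul_of_nonneg_left (mul_le_mul_of_nonneg_left hmax hminnn) (by positivity)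
    _ = 2/π * min |u| |u - π| := by field_simp; ring
    _ ≤ |Real.sin u| := hmin

lemma aux_integrableOn_logsin :
    IntegrableOn (fun u : ℝ => Real.log (Real.sin u)) (Ioo (-(π/2)) (3*π/2)) := by
  have hπ := Real.pi_pos
  set c : ℝ := 4 / (3*π^2) with hc
  have hcpos : 0 < c := by positivity
  have hle : -(π/2) ≤ (3*π/2 : ℝ) := by linarith
  have hioo : ∀ p q : ℝ, p ≤ q → IntegrableOn Real.log (Ioo p q) := by
    intro p q hpq
    exact ((intervalIntegrable_iff_integrableOn_Ioc_of_le hpq).mp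
      (aux_intervalIntegrable_log p q)).mono_set Ioo_subset_Ioc_self
  have hg : IntegrableOn (fun u : ℝ => -Real.log c - Real.log u - Real.log (u - π))
      (Ioo (-(π/2)) (3*π/2)) := by
    have h1 : IntegrableOn Real.log (Ioo (-(π/2)) (3*π/2)) := hioo _ _ hle
    have h2 : IntegrableOn (fun u : ℝ => Real.log (u - π)) (Ioo (-(π/2)) (3*π/2)) := by
      have h := (aux_intervalIntegrable_log (-(3*π/2)) (π/2)).comp_add_right (-π)
      rw [intervalIntegrable_iff_integrableOn_Ioc_of_le (by linarith)] at h
      have heq : (fun u : ℝ => Real.log (u - π)) = fun u : ℝ => Real.log (u + -π) := by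
        funext u; rw [sub_eq_add_neg]
      rw [heq]
      refine h.mono_set ?_
      intro x hx
      exact ⟨by linarith [hx.1], by linarith [hx.2]⟩
    exact ((integrable_const (-Real.log c)).sub h1).sub h2
  apply Integrable.mono' hg
  · exact ((Real.measurable_log.comp Real.measurable_sin).aestronglyMeasurable)
  · have hae : ∀ᵐ u : ℝ ∂(volume.restrict (Ioo (-(π/2)) (3*π/2))),
        u ∈ Ioo (-(π/2)) (3*π/2) := ae_restrict_mem measurableSet_Ioo
    have hne : ∀ᵐ u : ℝ ∂(volume.restrict (Ioo (-(π/2)) (3*π/2))), u ≠ 0 ∧ u ≠ π := by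
      apply Filter.Eventually.filter_mono (ae_mono Measure.restrict_le_self)
      have h0 : (volume ({0, π} : Set ℝ)) = 0 :=
        ((Set.finite_singleton π).insert 0).measure_zero volume
      have := (measure_eq_zero_iff_ae_notMem (μ := volume) (s := ({0, π} : Set ℝ))).mp h0
      filter_upwards [this] with u hu
      simp only [mem_insert_iff, mem_singleton_iff, not_or] at hu
      exact hu
    filter_upwards [hae, hne] with u hu hune
    have hsin_ne : Real.sin u ≠ 0 := by
      intro h0
      have habs : |Real.sin u| = 0 := by rw [h0, abs_zero]
      have := aux_sin_lower hu
      rw [habs] at this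
      have hu1 : |u| > 0 := abs_pos.2 hune.1
      have hu2 : |u - π| > 0 := abs_pos.2 (sub_ne_zero.2 hune.2)
      have hpos : 0 < 4 / (3*π^2) * (|u| * |u - π|) := by positivity
      linarith
    have hlogle : Real.log (Real.sin u) ≤ 0 := by
      rw [← Real.log_abs]
      exact Real.log_nonpos (abs_nonneg _) (abs_sin_le_one u) |>.trans (le_refl 0)
    rw [Real.norm_eq_abs, abs_of_nonpos hlogle]
    have hlb : Real.log c + Real.log |u| + Real.log |u - π| ≤ Real.log (Real.sin u) := by
      rw [← Real.log_abs (Real.sin u)]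
      have hu1 : |u| ≠ 0 := abs_ne_zero.2 hune.1
      have hu2 : |u - π| ≠ 0 := abs_ne_zero.2 (sub_ne_zero.2 hune.2)
      have : Real.log (c * (|u| * |u - π|)) ≤ Real.log |Real.sin u| :=
        Real.log_le_log (by positivity) (aux_sin_lower hu)
      rwa [Real.log_mul (ne_of_gt hcpos) (by positivity), Real.log_mul hu1 hu2, ← add_assoc] at this
    rw [Real.log_abs, Real.log_abs] at hlb
    linarith

lemma aux_II {a b : ℝ} (ha : a ∈ Icc (-(π/2)) (3*π/2)) (hb : b ∈ Icc (-(π/2)) (3*π/2)) :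
    IntervalIntegrable (fun u : ℝ => Real.log (Real.sin u)) volume a b := by
  rw [intervalIntegrable_iff]
  have h : IntegrableOn (fun u : ℝ => Real.log (Real.sin u)) (Icc (-(π/2)) (3*π/2)) := by
    rw [integrableOn_Icc_iff_integrableOn_Ioo]
    exact aux_integrableOn_logsin
  apply h.mono_set
  refine (uIoc_subset_uIcc).trans (Set.uIcc_subset_Icc ha hb)

lemma aux_logsin_pi : ∫ u in (0:ℝ)..π, Real.log (Real.sin u) = -π * Real.log 2 := by
  have hπ := Real.pi_pos
  set G : ℝ → ℝ := fun u => Real.log (Real.sin u) with hG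
  have mem : ∀ x : ℝ, 0 ≤ x → x ≤ π → x ∈ Icc (-(π/2)) (3*π/2) := by
    intro x h1 h2; exact ⟨by linarith, by linarith⟩
  have II1 : IntervalIntegrable G volume 0 (π/2) :=
    aux_II (mem 0 le_rfl hπ.le) (mem (π/2) (by linarith) (by linarith))
  have II2 : IntervalIntegrable G volume (π/2) π :=
    aux_II (mem (π/2) (by linarith) (by linarith)) (mem π hπ.le le_rfl)
  -- reflection: ∫_{π/2}^π G = ∫_0^{π/2} G
  have h2 : ∫ u in (π/2:ℝ)..π, G u = ∫ u in (0:ℝ)..(π/2), G u := by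
    have := intervalIntegral.integral_comp_sub_left (a := 0) (b := π/2) G π
    simp only [sub_zero, show π - π/2 = π/2 by ring] at this
    rw [← this]
    congr 1
    funext x
    simp only [hG, Real.sin_pi_sub]
  have h1 : ∫ u in (0:ℝ)..π, G u = 2 * ∫ u in (0:ℝ)..(π/2), G u := by
    rw [← intervalIntegral.integral_add_adjacent_intervals II1 II2, h2]; ring
  -- log cos
  have IIcos : IntervalIntegrable (fun u : ℝ => Real.log (Real.cos u)) volume 0 (π/2) := by
    have h := II1.comp_sub_left (π/2)
    simp only [sub_zero, sub_self] at h
    have heq : (fun x : ℝ => G (π/2 - x)) = fun x : ℝ => Real.log (Real.cos x) := by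
      funext x; simp only [hG, Real.sin_pi_div_two_sub]
    rw [heq] at h
    exact h.symm
  have hcos : ∫ u in (0:ℝ)..(π/2), Real.log (Real.cos u) = ∫ u in (0:ℝ)..(π/2), G u := by
    have := intervalIntegral.integral_comp_sub_left (a := 0) (b := π/2) G (π/2)
    simp only [sub_zero, sub_self] at this
    rw [← this]
    congr 1
    funext x
    simp only [hG, Real.sin_pi_div_two_sub]
  -- doubling
  have hdouble : ∫ u in (0:ℝ)..(π/2), G (2*u) = 2⁻¹ * ∫ u in (0:ℝ)..π, G u := by
    have := intervalIntegral.integral_comp_mul_left (a := 0) (b := π/2) G (two_ne_zero)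
    simp only [mul_zero, show (2:ℝ) * (π/2) = π by ring, smul_eq_mul] at this
    rw [this]
  have hsplit : ∫ u in (0:ℝ)..(π/2), G (2*u)
      = ∫ u in (0:ℝ)..(π/2), (Real.log 2 + G u + Real.log (Real.cos u)) := by
    apply intervalIntegral.integral_congr_ae
    have hne : ∀ᵐ u : ℝ, u ≠ π/2 := by
      have h0 : volume ({π/2} : Set ℝ) = 0 := measure_singleton _
      exact (measure_eq_zero_iff_ae_notMem.mp h0).mono (fun x hx => hx)
    filter_upwards [hne] with u hu hmem
    rw [uIoc_of_le (by linarith : (0:ℝ) ≤ π/2)] at hmem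
    have hu1 : 0 < u := hmem.1
    have hu2 : u < π/2 := lt_of_le_of_ne hmem.2 hu
    have hsinpos : 0 < Real.sin u := Real.sin_pos_of_pos_of_lt_pi hu1 (by linarith)
    have hcospos : 0 < Real.cos u := Real.cos_pos_of_mem_Ioo ⟨by linarith, hu2⟩
    simp only [hG, Real.sin_two_mul]
    rw [Real.log_mul (by positivity) (ne_of_gt hcospos),
      Real.log_mul (two_ne_zero) (ne_of_gt hsinpos), add_assoc]
  have hsum : ∫ u in (0:ℝ)..(π/2), (Real.log 2 + G u + Real.log (Real.cos u))
      = π/2 * Real.log 2 + (∫ u in (0:ℝ)..(π/2), G u) + ∫ u in (0:ℝ)..(π/2), Real.log (Real.cos u) := by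
    rw [intervalIntegral.integral_add ((_root_.intervalIntegrable_const).add II1) IIcos,
      intervalIntegral.integral_add _root_.intervalIntegrable_const II1]
    simp
  have final := hsplit
  rw [hdouble, hsum, hcos] at final
  rw [h1] at final ⊢
  linarith [final]

local notation "G" => fun u : ℝ => Real.log (Real.sin u)

lemma aux_G_neg (x : ℝ) : Real.log (Real.sin (-x)) = Real.log (Real.sin x) := by
  rw [Real.sin_neg, Real.log_neg_eq_log]

lemma aux_G_pi (x : ℝ) : Real.log (Real.sin (x + π)) = Real.log (Real.sin x) := by
  rw [Real.sin_add, Real.sin_pi, Real.cos_pi]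
  simp [Real.log_neg_eq_log]

lemma aux_shift (a b : ℝ) : ∫ u in a..b, G u = ∫ u in (a+π)..(b+π), G u := by
  rw [← intervalIntegral.integral_comp_add_right (fun u => G u) π]
  congr 1
  funext x
  exact (aux_G_pi x).symm

lemma aux_invariance {c : ℝ} (hc : c ∈ Icc (-(π/2)) 0) :
    ∫ u in c..(c+π), G u = ∫ u in (0:ℝ)..π, G u := by
  have hπ := Real.pi_pos
  have m1 : c ∈ Icc (-(π/2)) (3*π/2) := ⟨hc.1, by linarith [hc.2]⟩
  have m2 : (0:ℝ) ∈ Icc (-(π/2)) (3*π/2) := ⟨by linarith, by linarith⟩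
  have m3 : c + π ∈ Icc (-(π/2)) (3*π/2) := ⟨by linarith [hc.1], by linarith [hc.2]⟩
  have m4 : π ∈ Icc (-(π/2)) (3*π/2) := ⟨by linarith, by linarith⟩
  have h1 : (∫ u in c..(0:ℝ), G u) + ∫ u in (0:ℝ)..(c+π), G u = ∫ u in c..(c+π), G u :=
    intervalIntegral.integral_add_adjacent_intervals (aux_II m1 m2) (aux_II m2 m3)
  have h2 : ∫ u in c..(0:ℝ), G u = ∫ u in (c+π)..π, G u := by
    rw [aux_shift c 0, zero_add]
  have h3 : (∫ u in (0:ℝ)..(c+π), G u) + ∫ u in (c+π)..π, G u = ∫ u in (0:ℝ)..π, G u :=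
    intervalIntegral.integral_add_adjacent_intervals (aux_II m2 m3) (aux_II m3 m4)
  linarith [h1, h2, h3]

lemma aux_key (φ : ℝ) (hφ : φ ∈ Icc 0 π) :
    ∫ θ in (0:ℝ)..π, (Real.log 2 + Real.log (Real.sin (θ/2 + φ/2))
      + Real.log (Real.sin (θ/2 + -(φ/2)))) = -π * Real.log 2 := by
  have hπ := Real.pi_pos
  obtain ⟨hφ0, hφπ⟩ := hφ
  -- interval integrability of the pieces
  have mA1 : φ/2 ∈ Icc (-(π/2)) (3*π/2) := ⟨by linarith, by linarith⟩
  have mA2 : π/2 + φ/2 ∈ Icc (-(π/2)) (3*π/2) := ⟨by linarith, by linarith⟩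
  have mB1 : -(φ/2) ∈ Icc (-(π/2)) (3*π/2) := ⟨by linarith, by linarith⟩
  have mB2 : π/2 + -(φ/2) ∈ Icc (-(π/2)) (3*π/2) := ⟨by linarith, by linarith⟩
  have ii1 : IntervalIntegrable (fun θ : ℝ => Real.log (Real.sin (θ/2 + φ/2))) volume 0 π := by
    have h0 := aux_II mA1 mA2
    have h1 := (h0.comp_add_right (φ/2)).comp_mul_right (c := 2⁻¹)
    have heq : (fun x : ℝ => Real.log (Real.sin (x * 2⁻¹ + φ/2)))
        = fun θ : ℝ => Real.log (Real.sin (θ/2 + φ/2)) := by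
      funext x
      have h : x * 2⁻¹ + φ/2 = x/2 + φ/2 := by ring
      rw [h]
    rw [heq] at h1
    have e1 : (φ/2 - φ/2) / 2⁻¹ = (0:ℝ) := by ring
    have e2 : (π/2 + φ/2 - φ/2) / 2⁻¹ = π := by ring
    rwa [e1, e2] at h1
  have ii2 : IntervalIntegrable (fun θ : ℝ => Real.log (Real.sin (θ/2 + -(φ/2)))) volume 0 π := by
    have h0 := aux_II mB1 mB2
    have h1 := (h0.comp_add_right (-(φ/2))).comp_mul_right (c := 2⁻¹)
    have heq : (fun x : ℝ => Real.log (Real.sin (x * 2⁻¹ + -(φ/2))))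
        = fun θ : ℝ => Real.log (Real.sin (θ/2 + -(φ/2))) := by
      funext x
      have h : x * 2⁻¹ + -(φ/2) = x/2 + -(φ/2) := by ring
      rw [h]
    rw [heq] at h1
    have e1 : (-(φ/2) - -(φ/2)) / 2⁻¹ = (0:ℝ) := by ring
    have e2 : (π/2 + -(φ/2) - -(φ/2)) / 2⁻¹ = π := by ring
    rwa [e1, e2] at h1
  -- split the integral
  rw [intervalIntegral.integral_add (intervalIntegrable_const.add ii1) ii2,
    intervalIntegral.integral_add intervalIntegrable_const ii1,
    intervalIntegral.integral_const]
  -- compute piece A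
  have hA : ∫ θ in (0:ℝ)..π, Real.log (Real.sin (θ/2 + φ/2))
      = 2 * ∫ u in (φ/2)..(π/2 + φ/2), G u := by
    rw [intervalIntegral.integral_comp_div_add (fun u => G u) two_ne_zero (φ/2), smul_eq_mul,
      zero_div, zero_add]
  have hB : ∫ θ in (0:ℝ)..π, Real.log (Real.sin (θ/2 + -(φ/2)))
      = 2 * ∫ u in (-(φ/2))..(π/2 + -(φ/2)), G u := by
    rw [intervalIntegral.integral_comp_div_add (fun u => G u) two_ne_zero (-(φ/2)), smul_eq_mul,
      zero_div, zero_add]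
  -- reflect piece B
  have hBrefl : ∫ u in (-(φ/2))..(π/2 + -(φ/2)), G u = ∫ u in (φ/2 - π/2)..(φ/2), G u := by
    have h := intervalIntegral.integral_comp_neg (a := φ/2 - π/2) (b := φ/2) (fun u => G u)
    have heq : (fun x : ℝ => Real.log (Real.sin (-x))) = fun u : ℝ => Real.log (Real.sin u) := by
      funext x; exact aux_G_neg x
    rw [heq] at h
    have h2 : π/2 + -(φ/2) = -(φ/2 - π/2) := by ring
    rw [h2]
    exact h.symm
  -- combine
  have mC1 : φ/2 - π/2 ∈ Icc (-(π/2)) (3*π/2) := ⟨by linarith, by linarith⟩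
  have mC2 : φ/2 ∈ Icc (-(π/2)) (3*π/2) := mA1
  have mC3 : φ/2 + π/2 ∈ Icc (-(π/2)) (3*π/2) := ⟨by linarith, by linarith⟩
  have hadj : (∫ u in (φ/2 - π/2)..(φ/2), G u) + ∫ u in (φ/2)..(φ/2 + π/2), G u
      = ∫ u in (φ/2 - π/2)..(φ/2 + π/2), G u :=
    intervalIntegral.integral_add_adjacent_intervals (aux_II mC1 mC2) (aux_II mC2 mC3)
  have hinv : ∫ u in (φ/2 - π/2)..(φ/2 + π/2), G u = -π * Real.log 2 := by
    have h := aux_invariance (c := φ/2 - π/2) ⟨by linarith, by linarith⟩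
    rw [show φ/2 - π/2 + π = φ/2 + π/2 by ring] at h
    rw [h, aux_logsin_pi]
  have hA2 : ∫ u in (φ/2)..(π/2 + φ/2), G u = ∫ u in (φ/2)..(φ/2 + π/2), G u := by
    rw [show π/2 + φ/2 = φ/2 + π/2 by ring]
  rw [hA, hB, hBrefl, hA2]
  have : (∫ u in (φ/2)..(φ/2 + π/2), G u) + ∫ u in (φ/2 - π/2)..(φ/2), G u = -π * Real.log 2 := by
    rw [add_comm, hadj, hinv]
  simp only [smul_eq_mul, sub_zero]
  nlinarith [this]

/-- The logarithmic potential of the equilibrium density `ρ(s) = (1-s²)^{-1/2}` is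
constant on `[-1,1]`: for every `t ∈ [-1,1]`,
`∫_{-1}^1 ln|t-s| · (1-s²)^{-1/2} ds = -π ln 2`. -/
theorem stmt_1 (t : ℝ) (ht : t ∈ Icc (-1 : ℝ) 1) :
    ∫ s in Ioo (-1 : ℝ) 1, Real.log |t - s| * (Real.sqrt (1 - s ^ 2))⁻¹
      = -π * Real.log 2 := by
  have hπ := Real.pi_pos
  set φ := Real.arccos t with hφdef
  have hφ0 : 0 ≤ φ := Real.arccos_nonneg t
  have hφπ : φ ≤ π := Real.arccos_le_pi t
  have hcosφ : Real.cos φ = t := Real.cos_arccos ht.1 ht.2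
  -- change of variables s = cos θ
  have himg : Real.cos '' (Ioo 0 π) = Ioo (-1:ℝ) 1 := by
    ext s
    constructor
    · rintro ⟨θ, hθ, rfl⟩
      constructor
      · have h := Real.strictAntiOn_cos ⟨hθ.1.le, hθ.2.le⟩ ⟨hπ.le, le_rfl⟩ hθ.2
        rwa [Real.cos_pi] at h
      · have h := Real.strictAntiOn_cos ⟨le_rfl, hπ.le⟩ ⟨hθ.1.le, hθ.2.le⟩ hθ.1
        rwa [Real.cos_zero] at h
    · intro hs
      refine ⟨Real.arccos s, ⟨Real.arccos_pos.2 hs.2, ?_⟩, Real.cos_arccos hs.1.le hs.2.le⟩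
      exact lt_of_le_of_ne (Real.arccos_le_pi s)
        (by rw [Ne, Real.arccos_eq_pi]; linarith [hs.1])
  have hsub := integral_image_eq_integral_abs_deriv_smul measurableSet_Ioo
    (fun x _ => (Real.hasDerivAt_cos x).hasDerivWithinAt)
    (Real.injOn_cos.mono Ioo_subset_Icc_self)
    (fun s => Real.log |t - s| * (Real.sqrt (1 - s ^ 2))⁻¹)
  rw [himg] at hsub
  rw [hsub]
  -- simplify the transformed integrand
  have hstep : ∫ θ in Ioo (0:ℝ) π,
      |(-Real.sin θ)| • (Real.log |t - Real.cos θ| * (Real.sqrt (1 - Real.cos θ ^ 2))⁻¹)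
      = ∫ θ in Ioo (0:ℝ) π, Real.log |t - Real.cos θ| := by
    apply setIntegral_congr_fun measurableSet_Ioo
    intro θ hθ
    simp only []
    have hsinpos : 0 < Real.sin θ := Real.sin_pos_of_pos_of_lt_pi hθ.1 hθ.2
    have hsqrt : Real.sqrt (1 - Real.cos θ ^ 2) = Real.sin θ := by
      rw [← Real.sin_sq, Real.sqrt_sq hsinpos.le]
    rw [hsqrt, abs_neg, abs_of_pos hsinpos, smul_eq_mul]
    field_simp
  rw [hstep]
  -- a.e. rewrite via product formula
  have hcongr : ∫ θ in Ioo (0:ℝ) π, Real.log |t - Real.cos θ|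
      = ∫ θ in Ioo (0:ℝ) π, (Real.log 2 + Real.log (Real.sin (θ/2 + φ/2))
        + Real.log (Real.sin (θ/2 + -(φ/2)))) := by
    apply setIntegral_congr_ae measurableSet_Ioo
    have hne : ∀ᵐ θ : ℝ, θ ≠ φ := by
      have h0 : volume ({φ} : Set ℝ) = 0 := measure_singleton _
      exact (measure_eq_zero_iff_ae_notMem.mp h0).mono (fun x hx => hx)
    filter_upwards [hne] with θ hθne hθ
    have hθ1 := hθ.1
    have hθ2 := hθ.2
    have ha1 : 0 < θ/2 + φ/2 := by linarith
    have ha2 : θ/2 + φ/2 < π := by linarith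
    have hsina : 0 < Real.sin (θ/2 + φ/2) := Real.sin_pos_of_pos_of_lt_pi ha1 ha2
    have hbne : Real.sin (θ/2 + -(φ/2)) ≠ 0 := by
      rcases lt_trichotomy θ φ with h | h | h
      · have h1 : -π < θ/2 + -(φ/2) := by linarith
        have h2 : θ/2 + -(φ/2) < 0 := by linarith
        exact ne_of_lt (Real.sin_neg_of_neg_of_neg_pi_lt h2 h1)
      · exact absurd h hθne
      · have h1 : 0 < θ/2 + -(φ/2) := by linarith
        have h2 : θ/2 + -(φ/2) < π := by linarith
        exact ne_of_gt (Real.sin_pos_of_pos_of_lt_pi h1 h2)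
    have key : t - Real.cos θ
        = 2 * Real.sin (θ/2 + φ/2) * Real.sin (θ/2 + -(φ/2)) := by
      rw [← hcosφ, Real.cos_sub_cos]
      rw [show (φ + θ)/2 = θ/2 + φ/2 from by ring,
        show (φ - θ)/2 = -(θ/2 + -(φ/2)) from by ring, Real.sin_neg]
      ring
    rw [key, Real.log_abs,
      Real.log_mul (mul_ne_zero two_ne_zero (ne_of_gt hsina)) hbne,
      Real.log_mul two_ne_zero (ne_of_gt hsina)]
  rw [hcongr]
  -- convert to interval integral and finish
  have hconv : ∫ θ in Ioo (0:ℝ) π, (Real.log 2 + Real.log (Real.sin (θ/2 + φ/2))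
        + Real.log (Real.sin (θ/2 + -(φ/2))))
      = ∫ θ in (0:ℝ)..π, (Real.log 2 + Real.log (Real.sin (θ/2 + φ/2))
        + Real.log (Real.sin (θ/2 + -(φ/2)))) := by
    rw [intervalIntegral.integral_of_le hπ.le, integral_Ioc_eq_integral_Ioo]
  rw [hconv, aux_key φ ⟨hφ0, hφπ⟩]
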